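/- Let n ≥ 2 and let J be the ideal of ℚ[z₁,…,z_{n−1},t] generated by the quadratic polynomials z_k(z_k − (1/2)z_{k−1} − (1/2)z_{k+1} − t) for k = 1,…,n−1, with the convention z₀ = z_n = 0. Then, with the standard total-degree grading (each variable in degree 1), the Hilbert series of ℚ[z₁,…,z_{n−1},t]/J equals (1+q)^{n−1}/(1−q). (The paper states the identity as (1+q²)^{n−1}/(1−q²) with each variable in degree 2, which is obtained from this one by substituting q² for q.) -/

import Mathlib

/-- The Hilbert series of the quotient of the polynomial ring `ℚ[xᵢ : i ∈ σ]` (graded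
by total degree, each variable in degree 1) by an ideal `I`: the coefficient of `qˡ` is
the `ℚ`-dimension of the image of the degree-`ℓ` homogeneous component under the
quotient map, i.e. of `Rₗ/(I ∩ Rₗ)`. -/
noncomputable def hilbertSeries {σ : Type*} (I : Ideal (MvPolynomial σ ℚ)) :
    PowerSeries ℚ :=
  PowerSeries.mk fun ℓ =>
    (Module.finrank ℚ
      (Submodule.map (Ideal.Quotient.mkₐ ℚ I).toLinearMap
        (MvPolynomial.homogeneousSubmodule σ ℚ ℓ)) : ℚ)

/-- The variable `z_k` (1-indexed, `k = 1, …, n-1`) of `ℚ[z₁,…,z_{n-1},t]`, with the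
convention `z₀ = z_n = 0`.  The variable `t` is `MvPolynomial.X none`. -/
noncomputable def zVar (n : ℕ) (k : ℕ) : MvPolynomial (Option (Fin (n - 1))) ℚ :=
  if h : 1 ≤ k ∧ k ≤ n - 1 then MvPolynomial.X (some ⟨k - 1, by omega⟩) else 0



open Classical in
/-- forward elimination coefficients -/
noncomputable def lamc (P : ℕ → Prop) : ℕ → ℚ
  | 0 => if P 0 then 2⁻¹ else 0
  | (m+1) => if P (m+1) then (2 - lamc P m)⁻¹ else 0

lemma lamc_bound (P : ℕ → Prop) (m : ℕ) : 0 ≤ lamc P m ∧ lamc P m < 1 := by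
  induction m with
  | zero =>
    by_cases h : P 0 <;> simp [lamc, h] <;> norm_num
  | succ m ih =>
    by_cases h : P (m+1) <;> simp only [lamc, h, if_true, if_false]
    · have h2 : (1:ℚ) < 2 - lamc P m := by linarith [ih.1, ih.2]
      have h3 : (0:ℚ) < 2 - lamc P m := by linarith
      constructor
      · exact le_of_lt (inv_pos.mpr h3)
      · rw [inv_lt_one_iff₀]; right; linarith
    · norm_num

theorem run_lemma {V : Type*} [AddCommGroup V] [Module ℚ V] (U : Submodule ℚ V)
    (P : ℕ → Prop) (x : ℕ → V) (M : ℕ)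
    (hA : ∀ m, ¬ P m → x m ∈ U)
    (hM : ∀ m, M ≤ m → ¬ P m)
    (hB : ∀ m, P m →
      x m - (if m = 0 then 0 else (2:ℚ)⁻¹ • x (m-1)) - (2:ℚ)⁻¹ • x (m+1) ∈ U) :
    ∀ m, x m ∈ U := by
  have F : ∀ m, x m - lamc P m • x (m+1) ∈ U := by
    intro m
    induction m with
    | zero =>
      by_cases h : P 0
      · have := hB 0 h
        simpa [lamc, h] using this
      · simpa [lamc, h] using hA 0 h
    | succ m ih =>
      by_cases h : P (m+1)
      · have hb := hB (m+1) h
        simp only [Nat.succ_ne_zero, if_false, Nat.add_sub_cancel] at hb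
        set c := lamc P m with hc
        have hc1 : 0 ≤ c := (lamc_bound P m).1
        have hc2 : c < 1 := (lamc_bound P m).2
        have hne : (2 - c) ≠ 0 := by linarith
        have key : x (m+1) - (2 - c)⁻¹ • x (m+2)
            = ((2-c)⁻¹ * 2) • ((x (m+1) - (2:ℚ)⁻¹ • x m - (2:ℚ)⁻¹ • x (m+2))
              + (2:ℚ)⁻¹ • (x m - c • x (m+1))) := by
          match_scalars <;> field_simp <;> ring
        rw [lamc, if_pos h, ← hc, key]
        exact U.smul_mem _ (U.add_mem hb (U.smul_mem _ ih))
      · simpa [lamc, h] using hA (m+1) h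
  have B : ∀ k m, M ≤ m + k → x m ∈ U := by
    intro k
    induction k with
    | zero => intro m hm; exact hA m (hM m (by omega))
    | succ k ih =>
      intro m hm
      have h2 : x (m+1) ∈ U := ih (m+1) (by omega)
      have : x m = (x m - lamc P m • x (m+1)) + lamc P m • x (m+1) := by abel
      rw [this]
      exact U.add_mem (F m) (U.smul_mem _ h2)
  intro m
  exact B M m (by omega)



namespace Pet
open MvPolynomial

variable (n : ℕ) (S : Finset (Fin (n-1)))

/-- length of the run of `S` ending at `m` -/
def aa : ℕ → ℕ
  | 0 => if h : 0 < n-1 then (if (⟨0,h⟩ : Fin (n-1)) ∈ S then 1 else 0) else 0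
  | (m+1) => if h : m+1 < n-1 then (if (⟨m+1,h⟩ : Fin (n-1)) ∈ S then aa m + 1 else 0) else 0

/-- length of the run of `S` starting at `m` -/
def bb (m : ℕ) : ℕ :=
  if h : m < n-1 then (if (⟨m,h⟩ : Fin (n-1)) ∈ S then bb (m+1) + 1 else 0) else 0
  termination_by n - 1 - m
  decreasing_by omega

lemma aa_apply (m : ℕ) :
    aa n S m = if h : m < n-1 then (if (⟨m,h⟩ : Fin (n-1)) ∈ S then
      (if m = 0 then 1 else aa n S (m-1) + 1) else 0) else 0 := by
  cases m with
  | zero => rfl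
  | succ m => simp [aa]

lemma aa_zero_of_not_mem {m : ℕ} (h : ∀ hm : m < n-1, (⟨m,hm⟩ : Fin (n-1)) ∉ S) :
    aa n S m = 0 := by
  rw [aa_apply]
  split
  · next hm => rw [if_neg (h hm)]
  · rfl

lemma bb_zero_of_not_mem {m : ℕ} (h : ∀ hm : m < n-1, (⟨m,hm⟩ : Fin (n-1)) ∉ S) :
    bb n S m = 0 := by
  rw [bb]
  split
  · next hm => rw [if_neg (h hm)]
  · rfl

lemma aa_pos {m : ℕ} (hm : m < n-1) (h : (⟨m,hm⟩ : Fin (n-1)) ∈ S) : 1 ≤ aa n S m := by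
  rw [aa_apply, dif_pos hm, if_pos h]
  split <;> omega

lemma bb_pos {m : ℕ} (hm : m < n-1) (h : (⟨m,hm⟩ : Fin (n-1)) ∈ S) : 1 ≤ bb n S m := by
  rw [bb, dif_pos hm, if_pos h]; omega

/-- the value of `z`-coordinate number `m` (0-indexed) at the fixed point attached to `S` -/
noncomputable def cval (m : ℕ) : ℚ := (aa n S m * bb n S m : ℕ)

/-- the evaluation point attached to `S` (with `t = 1`). -/
noncomputable def vS : Option (Fin (n-1)) → ℚ := fun o => o.elim 1 (fun k => cval n S k)

lemma cval_eq_zero_of_not_mem {m : ℕ} (h : ∀ hm : m < n-1, (⟨m,hm⟩ : Fin (n-1)) ∉ S) :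
    cval n S m = 0 := by
  simp [cval, aa_zero_of_not_mem n S h]

/-- `cval (m-1) = (aa m - 1) * (bb m + 1)` for `m ∈ S` -/
lemma cval_left {m : ℕ} (hm : m < n-1) (h : (⟨m,hm⟩ : Fin (n-1)) ∈ S) :
    (if m = 0 then (0:ℚ) else cval n S (m-1))
      = ((aa n S m : ℚ) - 1) * ((bb n S m : ℚ) + 1) := by
  rcases Nat.eq_zero_or_pos m with h0 | h0
  · subst h0
    rw [if_pos rfl, aa_apply, dif_pos hm, if_pos h, if_pos rfl]
    norm_num
  · rw [if_neg (by omega)]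
    have hm1 : m - 1 < n - 1 := by omega
    by_cases h1 : (⟨m-1, hm1⟩ : Fin (n-1)) ∈ S
    · -- aa m = aa (m-1) + 1, bb (m-1) = bb m + 1
      have ha : aa n S m = aa n S (m-1) + 1 := by
        rw [aa_apply n S m, dif_pos hm, if_pos h, if_neg (by omega)]
      have hb : bb n S (m-1) = bb n S m + 1 := by
        rw [bb, dif_pos hm1, if_pos h1]
        congr 2
        omega
      rw [cval, ha, hb]
      push_cast
      ring
    · have ha : aa n S m = 1 := by
        rw [aa_apply n S m, dif_pos hm, if_pos h, if_neg (by omega),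
          aa_zero_of_not_mem n S (fun hm' => by convert h1)]
      rw [cval, aa_zero_of_not_mem n S (fun hm' => by convert h1), ha]
      norm_num
lemma cval_right {m : ℕ} (hm : m < n-1) (h : (⟨m,hm⟩ : Fin (n-1)) ∈ S) :
    cval n S (m+1) = ((aa n S m : ℚ) + 1) * ((bb n S m : ℚ) - 1) := by
  by_cases h1 : ∃ hm1 : m + 1 < n - 1, (⟨m+1, hm1⟩ : Fin (n-1)) ∈ S
  · obtain ⟨hm1, h1⟩ := h1
    have ha : aa n S (m+1) = aa n S m + 1 := by
      rw [aa_apply n S (m+1), dif_pos hm1, if_pos h1, if_neg (by omega)]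
      congr 2
    have hb : bb n S m = bb n S (m+1) + 1 := by
      rw [bb, dif_pos hm, if_pos h]
    rw [cval, ha, hb]
    push_cast
    ring
  · push_neg at h1
    have hb1 : bb n S (m+1) = 0 := bb_zero_of_not_mem n S h1
    have hb : bb n S m = 1 := by
      rw [bb, dif_pos hm, if_pos h, hb1]
    rw [cval, hb1, hb]
    norm_num

/-- the main PDE at the fixed point -/
lemma cval_pde {m : ℕ} (hm : m < n-1) (h : (⟨m,hm⟩ : Fin (n-1)) ∈ S) :
    cval n S m = (1/2) * (if m = 0 then (0:ℚ) else cval n S (m-1))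
      + (1/2) * cval n S (m+1) + 1 := by
  rw [cval_left n S hm h, cval_right n S hm h]
  have ha := aa_pos n S hm h
  have hb := bb_pos n S hm h
  have ha' : (1:ℚ) ≤ (aa n S m : ℚ) := by exact_mod_cast ha
  have hb' : (1:ℚ) ≤ (bb n S m : ℚ) := by exact_mod_cast hb
  rw [cval]
  push_cast
  ring





open MvPolynomial
variable (n : ℕ) (S : Finset (Fin (n-1)))

/-- the generators of the ideal -/
noncomputable def gen (k : Fin (n - 1)) : MvPolynomial (Option (Fin (n-1))) ℚ :=
  zVar n ((k : ℕ) + 1) *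
    (zVar n ((k : ℕ) + 1) - MvPolynomial.C (1/2 : ℚ) * zVar n (k : ℕ)
      - MvPolynomial.C (1/2 : ℚ) * zVar n ((k : ℕ) + 2) - MvPolynomial.X none)

lemma eval_zVar (m : ℕ) :
    eval (vS n S) (zVar n m) = if m = 0 then 0 else cval n S (m-1) := by
  rw [zVar]
  split
  · next h =>
    rw [eval_X]
    rw [if_neg (by omega)]
    rfl
  · next h =>
    rw [map_zero]
    split
    · rfl
    · next h0 =>
      rw [cval_eq_zero_of_not_mem]
      intro hm
      omega

lemma eval_zVar_succ (k : Fin (n-1)) :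
    eval (vS n S) (zVar n ((k:ℕ)+1)) = cval n S k := by
  rw [eval_zVar, if_neg (by omega)]
  norm_num

lemma eval_zVar_succ2 (k : ℕ) :
    eval (vS n S) (zVar n (k+2)) = cval n S (k+1) := by
  rcases Nat.lt_or_ge (k+1) (n-1) with h | h
  · rw [eval_zVar, if_neg (by omega)]
    norm_num
  · rw [zVar, dif_neg (by omega), map_zero,
      cval_eq_zero_of_not_mem n S (fun hm => by omega)]

lemma eval_gen (k : Fin (n-1)) : eval (vS n S) (gen n k) = 0 := by
  rw [gen, map_mul, map_sub, map_sub, map_sub, map_mul, map_mul, eval_C, eval_X,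
    eval_zVar_succ, eval_zVar, eval_zVar_succ2]
  show cval n S k * _ = 0
  by_cases h : k ∈ S
  · have := cval_pde n S k.isLt (by simpa using h)
    have hv : vS n S none = 1 := rfl
    rw [hv]
    rw [this]
    ring_nf
  · rw [cval_eq_zero_of_not_mem n S (fun hm => by simpa using h), zero_mul]

lemma span_le_ker :
    Ideal.span (Set.range (gen n)) ≤ RingHom.ker (eval (vS n S)) := by
  rw [Ideal.span_le]
  rintro _ ⟨k, rfl⟩
  exact eval_gen n S k



end Pet
namespace Pet
open MvPolynomial
variable (n : ℕ)

lemma X_eq {s : Option (Fin (n-1))} :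
    (X s : MvPolynomial (Option (Fin (n-1))) ℚ) = monomial (Finsupp.single s 1) 1 := rfl

lemma zVar_succ (k : Fin (n-1)) : zVar n ((k:ℕ)+1) = X (some k) := by
  rw [zVar, dif_pos ⟨by omega, by omega⟩]
  congr 1

/-- exponent vector of a basis monomial -/
noncomputable def mexp (ℓ : ℕ) (ε : Finset (Fin (n-1))) : Option (Fin (n-1)) →₀ ℕ :=
  (∑ k ∈ ε, Finsupp.single (some k) 1) + Finsupp.single none (ℓ - ε.card)

lemma mexp_some (ℓ : ℕ) (ε : Finset (Fin (n-1))) (k : Fin (n-1)) :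
    mexp n ℓ ε (some k) = if k ∈ ε then 1 else 0 := by
  rw [mexp, Finsupp.add_apply, Finsupp.single_apply, if_neg (by simp), add_zero,
    Finsupp.finset_sum_apply]
  rw [Finset.sum_congr rfl (fun j _ => Finsupp.single_apply (a := some j) (a' := some k) (b := 1))]
  simp only [Option.some_inj]
  exact Finset.sum_ite_eq' ε k (fun _ => 1)

lemma mexp_none (ℓ : ℕ) (ε : Finset (Fin (n-1))) :
    mexp n ℓ ε none = ℓ - ε.card := by
  rw [mexp, Finsupp.add_apply, Finsupp.single_apply, if_pos rfl, Finsupp.finset_sum_apply]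
  rw [Finset.sum_congr rfl (fun j _ => Finsupp.single_apply (a := some j) (a' := none) (b := 1))]
  simp

/-- the `z`-degree -/
def zd (α : Option (Fin (n-1)) →₀ ℕ) : ℕ := ∑ k : Fin (n-1), α (some k)

/-- the `z`-support -/
def zsupp (α : Option (Fin (n-1)) →₀ ℕ) : Finset (Fin (n-1)) :=
  Finset.univ.filter fun k => α (some k) ≠ 0

lemma degree_eq (α : Option (Fin (n-1)) →₀ ℕ) : α.degree = α none + zd n α := by
  rw [Finsupp.degree_apply, Finset.sum_subset (Finset.subset_univ _)
    (fun x _ hx => by simpa using hx)]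
  rw [univ_option, Finset.sum_insertNone]
  rfl

lemma zd_add (β δ : Option (Fin (n-1)) →₀ ℕ) : zd n (β + δ) = zd n β + zd n δ := by
  rw [zd, zd, zd, ← Finset.sum_add_distrib]
  rfl

lemma degree_add (β δ : Option (Fin (n-1)) →₀ ℕ) :
    (β + δ).degree = β.degree + δ.degree := by
  rw [degree_eq, degree_eq, degree_eq, zd_add, Finsupp.add_apply]
  ring

lemma degree_single (o : Option (Fin (n-1))) :
    (Finsupp.single o 1 : Option (Fin (n-1)) →₀ ℕ).degree = 1 := by
  rw [Finsupp.degree_apply, Finsupp.support_single_ne_zero _ one_ne_zero, Finset.sum_singleton,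
    Finsupp.single_eq_same]

lemma zd_eq_sum_zsupp (α : Option (Fin (n-1)) →₀ ℕ) :
    zd n α = ∑ k ∈ zsupp n α, α (some k) := by
  rw [zd, zsupp, Finset.sum_filter_ne_zero]

/-- the submodule: span of basis monomials of degree ℓ together with the ideal -/
noncomputable def Upol (ℓ : ℕ) : Submodule ℚ (MvPolynomial (Option (Fin (n-1))) ℚ) :=
  Submodule.span ℚ (Set.range fun ε : {ε : Finset (Fin (n-1)) // ε.card ≤ ℓ} =>
    monomial (mexp n ℓ ε.1) (1:ℚ))
  ⊔ Submodule.restrictScalars ℚ (Ideal.span (Set.range (gen n)))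

lemma gen_mul_mem (ℓ : ℕ) (k : Fin (n-1)) (w : MvPolynomial (Option (Fin (n-1))) ℚ) :
    gen n k * w ∈ Upol n ℓ :=
  Submodule.mem_sup_right
    (Ideal.mul_mem_right w _ (Ideal.subset_span ⟨k, rfl⟩))

lemma sqfree_mem (ℓ : ℕ) (α : Option (Fin (n-1)) →₀ ℕ) (hdeg : α.degree = ℓ)
    (hsq : ∀ k, α (some k) ≤ 1) : monomial α (1:ℚ) ∈ Upol n ℓ := by
  have hcard : (zsupp n α).card = zd n α := by
    rw [zsupp, zd, Finset.card_filter]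
    refine Finset.sum_congr rfl fun k _ => ?_
    have := hsq k
    split <;> omega
  have hzle : zd n α ≤ ℓ := by
    rw [← hdeg, degree_eq]; omega
  have hα : α = mexp n ℓ (zsupp n α) := by
    ext o
    rcases o with _ | k
    · rw [mexp_none, hcard]
      rw [← hdeg, degree_eq]
      omega
    · rw [mexp_some]
      have hk := hsq k
      by_cases h : k ∈ zsupp n α
      · rw [if_pos h]
        have : α (some k) ≠ 0 := (Finset.mem_filter.mp h).2
        omega
      · rw [if_neg h]
        by_contra hne
        exact h (Finset.mem_filter.mpr ⟨Finset.mem_univ _, hne⟩)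
  rw [hα]
  exact Submodule.mem_sup_left (Submodule.subset_span
    ⟨⟨zsupp n α, by omega⟩, rfl⟩)

lemma meas_lt {d s s' : ℕ} (hd : 1 ≤ d) :
    (d-1)*(d-1) + (d-1) + ((d-1) - s') < d*d + d + (d - s) := by
  rcases d with _ | e
  · omega
  · have h1 : (e+1)*(e+1) = e*e + e + e + 1 := by ring
    simp only [Nat.add_sub_cancel]
    omega

theorem mono_mem : ∀ (μ ℓ : ℕ) (α : Option (Fin (n-1)) →₀ ℕ),
    zd n α * zd n α + zd n α + (zd n α - (zsupp n α).card) = μ →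
    α.degree = ℓ → monomial α (1:ℚ) ∈ Upol n ℓ := by
  intro μ
  induction μ using Nat.strong_induction_on with
  | _ μ IH =>
  intro ℓ α hμ hdeg
  by_cases hsq : ∀ k, α (some k) ≤ 1
  · exact sqfree_mem n ℓ α hdeg hsq
  push_neg at hsq
  obtain ⟨j, hj⟩ := hsq
  set γ := α - Finsupp.single (some j) 1 with hγdef
  have hle : Finsupp.single (some j) (1:ℕ) ≤ α := Finsupp.single_le_iff.mpr (by omega)
  have hγj : γ (some j) = α (some j) - 1 := by
    rw [hγdef, Finsupp.tsub_apply, Finsupp.single_apply, if_pos rfl]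
  have hγo : ∀ o, o ≠ some j → γ o = α o := by
    intro o ho
    rw [hγdef, Finsupp.tsub_apply, Finsupp.single_apply, if_neg (fun h => ho h.symm)]
    omega
  have hγsome : ∀ k : Fin (n-1), γ (some k) = α (some k) - (if k = j then 1 else 0) := by
    intro k
    by_cases h : k = j
    · subst h; rw [hγj, if_pos rfl]
    · rw [hγo (some k) (by simpa using h), if_neg h]; omega
  have hαsome : ∀ k : Fin (n-1), α (some k) = γ (some k) + (if k = j then 1 else 0) := by
    intro k
    by_cases h : k = j
    · subst h; rw [hγj, if_pos rfl]; omega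
    · rw [hγo (some k) (by simpa using h), if_neg h]; omega
  have hzd : zd n α = zd n γ + 1 := by
    rw [zd, Finset.sum_congr rfl (fun k _ => hαsome k), Finset.sum_add_distrib,
      Finset.sum_ite_eq' Finset.univ j (fun _ => 1), if_pos (Finset.mem_univ j)]
    rfl
  have hjz : γ (some j) ≠ 0 := by rw [hγj]; omega
  have hzsupp : zsupp n γ = zsupp n α := by
    ext k
    simp only [zsupp, Finset.mem_filter, Finset.mem_univ, true_and]
    by_cases h : k = j
    · subst h
      rw [hγj]
      omega
    · rw [hγo (some k) (by simpa using h)]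
  have hεlt : (zsupp n α).card < zd n α := by
    rw [zd_eq_sum_zsupp]
    have hjmem : j ∈ zsupp n α := Finset.mem_filter.mpr ⟨Finset.mem_univ _, by omega⟩
    calc (zsupp n α).card = ∑ _k ∈ zsupp n α, 1 := by rw [Finset.sum_const, smul_eq_mul, mul_one]
    _ < ∑ k ∈ zsupp n α, α (some k) := by
        refine Finset.sum_lt_sum (fun i hi => ?_) ⟨j, hjmem, by omega⟩
        have := (Finset.mem_filter.mp hi).2
        omega
  have hdγ : γ.degree + 1 = ℓ := by
    rw [← hdeg, degree_eq, degree_eq, hγo none (by simp), hzd]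
    ring
  -- the chip positions
  set x : ℕ → MvPolynomial (Option (Fin (n-1))) ℚ := fun m =>
    if h : m < n-1 then monomial (γ + Finsupp.single (some ⟨m,h⟩) 1) (1:ℚ) else 0 with hxdef
  set P : ℕ → Prop := fun m => ∃ h : m < n-1, γ (some (⟨m,h⟩ : Fin (n-1))) ≠ 0 with hPdef
  -- degree and measure facts for γ + e
  have hdeg_add : ∀ o : Option (Fin (n-1)), (γ + Finsupp.single o 1).degree = ℓ := by
    intro o
    rw [degree_add, degree_single, hdγ]
  have hzd_addz : ∀ k : Fin (n-1), zd n (γ + Finsupp.single (some k) 1) = zd n γ + 1 := by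
    intro k
    rw [zd_add]
    congr 1
    rw [zd]
    have : ∀ i : Fin (n-1), (Finsupp.single (some k) 1 : Option (Fin (n-1)) →₀ ℕ) (some i)
        = if i = k then 1 else 0 := by
      intro i
      rw [Finsupp.single_apply]
      by_cases h : i = k
      · subst h; simp
      · rw [if_neg (by simpa using fun hh : (k:Fin (n-1)) = i => h hh.symm), if_neg h]
    rw [Finset.sum_congr rfl (fun i _ => this i),
      Finset.sum_ite_eq' Finset.univ k (fun _ => 1), if_pos (Finset.mem_univ k)]
  have happly_none : ∀ i : Fin (n-1),
      (Finsupp.single none (1:ℕ) : Option (Fin (n-1)) →₀ ℕ) (some i) = 0 := by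
    intro i
    rw [Finsupp.single_apply, if_neg (by simp)]
  -- membership for fresh sites
  have hIH0 : ∀ (k : Fin (n-1)), γ (some k) = 0 →
      monomial (γ + Finsupp.single (some k) 1) (1:ℚ) ∈ Upol n ℓ := by
    intro k hk
    have hβz : zd n (γ + Finsupp.single (some k) 1) = zd n α := by
      rw [hzd_addz k, ← hzd]
    have hk_not : k ∉ zsupp n α := by
      rw [← hzsupp]
      simp [zsupp, hk]
    have hsupp : zsupp n (γ + Finsupp.single (some k) 1) = insert k (zsupp n α) := by
      ext i
      simp only [zsupp, Finset.mem_filter, Finset.mem_univ, true_and, Finset.mem_insert]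
      rw [Finsupp.add_apply, Finsupp.single_apply]
      by_cases h : i = k
      · subst h
        simp
      · rw [if_neg (by simpa using fun hh : (k:Fin (n-1)) = i => h hh.symm), add_zero]
        have hiff := Finset.ext_iff.mp hzsupp i
        simp only [zsupp, Finset.mem_filter, Finset.mem_univ, true_and] at hiff
        tauto
    have hcard : (zsupp n (γ + Finsupp.single (some k) 1)).card = (zsupp n α).card + 1 := by
      rw [hsupp, Finset.card_insert_of_notMem hk_not]
    exact IH _ (by rw [hβz, hcard]; omega) ℓ _ rfl (hdeg_add _)
  have hIHt : monomial (γ + Finsupp.single none 1) (1:ℚ) ∈ Upol n ℓ := by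
    have hβz : zd n (γ + Finsupp.single none 1) = zd n γ := by
      rw [zd_add]
      have : zd n (Finsupp.single none 1 : Option (Fin (n-1)) →₀ ℕ) = 0 := by
        rw [zd, Finset.sum_congr rfl (fun i _ => happly_none i), Finset.sum_const_zero]
      rw [this, add_zero]
    have hsupp : zsupp n (γ + Finsupp.single none 1) = zsupp n α := by
      rw [← hzsupp]
      ext i
      simp only [zsupp, Finset.mem_filter, Finset.mem_univ, true_and]
      rw [Finsupp.add_apply, happly_none i, add_zero]
    have hγd : zd n γ = zd n α - 1 := by omega
    refine IH _ ?_ ℓ _ rfl (hdeg_add _)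
    rw [hβz, hsupp, hγd, ← hμ]
    exact meas_lt (by omega)
  -- run-lemma hypotheses
  have hA : ∀ m, ¬ P m → x m ∈ Upol n ℓ := by
    intro m hPm
    simp only [hPdef, not_exists, not_not] at hPm
    simp only [hxdef]
    by_cases h : m < n-1
    · rw [dif_pos h]
      exact hIH0 _ (hPm h)
    · rw [dif_neg h]
      exact (Upol n ℓ).zero_mem
  have hM : ∀ m, n-1 ≤ m → ¬ P m := by
    rintro m hm ⟨h, _⟩
    omega
  have hB : ∀ m, P m →
      x m - (if m = 0 then 0 else (2:ℚ)⁻¹ • x (m-1)) - (2:ℚ)⁻¹ • x (m+1) ∈ Upol n ℓ := by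
    rintro m ⟨h, hγm⟩
    set kf : Fin (n-1) := ⟨m, h⟩ with hkfdef
    have hkfval : (kf : ℕ) = m := rfl
    have hle2 : Finsupp.single (some kf) (1:ℕ) ≤ γ := Finsupp.single_le_iff.mpr (by omega)
    have hXw : (X (some kf) : MvPolynomial _ ℚ) * monomial (γ - Finsupp.single (some kf) 1) 1
        = monomial γ 1 := by
      rw [X_eq, monomial_mul, one_mul, add_tsub_cancel_of_le hle2]
    have hexp : gen n kf * monomial (γ - Finsupp.single (some kf) 1) (1:ℚ)
        = X (some kf) * monomial γ 1
          - C (1/2 : ℚ) * (zVar n (kf:ℕ) * monomial γ 1)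
          - C (1/2 : ℚ) * (zVar n ((kf:ℕ)+2) * monomial γ 1)
          - X none * monomial γ 1 := by
      have step : gen n kf * monomial (γ - Finsupp.single (some kf) 1) (1:ℚ)
          = (X (some kf) - C (1/2 : ℚ) * zVar n (kf:ℕ) - C (1/2 : ℚ) * zVar n ((kf:ℕ)+2)
              - X none) * ((X (some kf)) * monomial (γ - Finsupp.single (some kf) 1) 1) := by
        rw [gen, zVar_succ]
        ring
      rw [step, hXw]
      ring
    have e1 : X (some kf) * monomial γ (1:ℚ) = x m := by
      simp only [hxdef]
      rw [dif_pos h, X_eq, monomial_mul, one_mul, add_comm]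
    have e2 : C (1/2 : ℚ) * (zVar n m * monomial γ 1)
        = (if m = 0 then 0 else (2:ℚ)⁻¹ • x (m-1)) := by
      rcases Nat.eq_zero_or_pos m with h0 | h0
      · subst h0
        rw [if_pos rfl, zVar, dif_neg (by omega), zero_mul, mul_zero]
      · have hm1 : m - 1 < n - 1 := by omega
        rw [if_neg (by omega), zVar, dif_pos ⟨h0, by omega⟩]
        simp only [hxdef]
        rw [dif_pos hm1, X_eq, monomial_mul, one_mul, add_comm,
          MvPolynomial.smul_eq_C_mul]
        norm_num
    have e3 : C (1/2 : ℚ) * (zVar n (m+2) * monomial γ 1) = (2:ℚ)⁻¹ • x (m+1) := by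
      by_cases h2 : m + 2 ≤ n-1
      · rw [zVar, dif_pos ⟨by omega, h2⟩]
        simp only [hxdef]
        rw [dif_pos (by omega : m + 1 < n - 1), X_eq, monomial_mul, one_mul, add_comm,
          MvPolynomial.smul_eq_C_mul]
        norm_num
      · rw [zVar, dif_neg (by omega)]
        simp only [hxdef]
        rw [dif_neg (by omega)]
        simp
    have e4 : (X none : MvPolynomial (Option (Fin (n-1))) ℚ) * monomial γ 1
        = monomial (γ + Finsupp.single none 1) (1:ℚ) := by
      rw [X_eq, monomial_mul, one_mul, add_comm]
    have hkey : x m - (if m = 0 then 0 else (2:ℚ)⁻¹ • x (m-1)) - (2:ℚ)⁻¹ • x (m+1)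
        = gen n kf * monomial (γ - Finsupp.single (some kf) 1) 1
          + monomial (γ + Finsupp.single none 1) (1:ℚ) := by
      rw [hexp]
      simp only [hkfval]
      rw [e1, e2, e3, e4]
      abel
    rw [hkey]
    exact Submodule.add_mem _ (gen_mul_mem n ℓ kf _) hIHt
  have hrun := run_lemma (Upol n ℓ) P x (n-1) hA hM hB (j : ℕ)
  simp only [hxdef, dif_pos j.isLt, Fin.eta] at hrun
  rwa [tsub_add_cancel_of_le hle] at hrun
end Pet
namespace Pet
open MvPolynomial
variable (n : ℕ)

/-- the Peterson ideal -/
noncomputable def Jid : Ideal (MvPolynomial (Option (Fin (n-1))) ℚ) :=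
  Ideal.span (Set.range (gen n))

lemma eval_basis (S : Finset (Fin (n-1))) (ℓ : ℕ) (ε : Finset (Fin (n-1))) :
    eval (vS n S) (monomial (mexp n ℓ ε) (1:ℚ)) = ∏ k ∈ ε, cval n S k := by
  rw [eval_monomial, one_mul]
  rw [Finsupp.prod_fintype _ _ (fun i => pow_zero _)]
  rw [univ_option, Finset.prod_insertNone]
  have h2 : ∀ k : Fin (n-1), vS n S (some k) ^ (mexp n ℓ ε) (some k)
      = if k ∈ ε then cval n S k else 1 := by
    intro k
    rw [mexp_some]
    by_cases h : k ∈ ε <;> simp [h, vS, cval]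
  calc (vS n S none ^ (mexp n ℓ ε) none) *
        ∏ k : Fin (n-1), vS n S (some k) ^ (mexp n ℓ ε) (some k)
      = ∏ k : Fin (n-1), (if k ∈ ε then cval n S k else 1) := by
        rw [show vS n S none = 1 from rfl, one_pow, one_mul]
        exact Finset.prod_congr rfl (fun k _ => h2 k)
    _ = ∏ k ∈ ε, cval n S k := by rw [Finset.prod_ite_mem, Finset.univ_inter]

lemma cval_ne_zero (S : Finset (Fin (n-1))) (k : Fin (n-1)) (hk : k ∈ S) :
    cval n S (k : ℕ) ≠ 0 := by
  have ha := aa_pos n S k.isLt (by simpa using hk)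
  have hb := bb_pos n S k.isLt (by simpa using hk)
  rw [cval]
  exact Nat.cast_ne_zero.mpr (Nat.mul_ne_zero (by omega) (by omega))

theorem indep (ℓ : ℕ) :
    LinearIndependent ℚ (fun ε : {ε : Finset (Fin (n-1)) // ε.card ≤ ℓ} =>
      Ideal.Quotient.mkₐ ℚ (Jid n) (monomial (mexp n ℓ ε.1) (1:ℚ))) := by
  rw [Fintype.linearIndependent_iff]
  intro g hg
  have hq : (∑ i : {ε : Finset (Fin (n-1)) // ε.card ≤ ℓ},
      g i • monomial (mexp n ℓ i.1) (1:ℚ)) ∈ Jid n := by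
    rw [← Ideal.Quotient.eq_zero_iff_mem]
    have : Ideal.Quotient.mk (Jid n) (∑ i, g i • monomial (mexp n ℓ i.1) (1:ℚ))
        = ∑ i, g i • Ideal.Quotient.mkₐ ℚ (Jid n) (monomial (mexp n ℓ i.1) (1:ℚ)) := by
      rw [← Ideal.Quotient.mkₐ_eq_mk ℚ, map_sum]
      exact Finset.sum_congr rfl (fun i _ => map_smul _ _ _)
    rw [this, hg]
  have hev : ∀ S : Finset (Fin (n-1)),
      ∑ i : {ε : Finset (Fin (n-1)) // ε.card ≤ ℓ},
        g i * ∏ k ∈ i.1, cval n S k = 0 := by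
    intro S
    have hker : eval (vS n S) (∑ i : {ε : Finset (Fin (n-1)) // ε.card ≤ ℓ},
        g i • monomial (mexp n ℓ i.1) (1:ℚ)) = 0 := span_le_ker n S hq
    rw [map_sum] at hker
    rw [← hker]
    refine Finset.sum_congr rfl (fun i _ => ?_)
    rw [MvPolynomial.smul_eq_C_mul, map_mul, eval_C, eval_basis]
  have main : ∀ c : ℕ, ∀ i : {ε : Finset (Fin (n-1)) // ε.card ≤ ℓ},
      i.1.card = c → g i = 0 := by
    intro c
    induction c using Nat.strong_induction_on with
    | _ c IH =>
    intro i hc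
    have h0 := hev i.1
    have hzero : ∀ i' : {ε : Finset (Fin (n-1)) // ε.card ≤ ℓ}, i' ≠ i →
        g i' * ∏ k ∈ i'.1, cval n i.1 k = 0 := by
      intro i' hne
      by_cases hsub : i'.1 ⊆ i.1
      · have hlt : i'.1.card < c := by
          rw [← hc]
          exact Finset.card_lt_card (lt_of_le_of_ne hsub
            (fun h => hne (Subtype.ext h)))
        rw [IH _ hlt i' rfl, zero_mul]
      · obtain ⟨k, hk1, hk2⟩ := Finset.not_subset.mp hsub
        rw [Finset.prod_eq_zero hk1
          (cval_eq_zero_of_not_mem n i.1 (fun hm => by simpa using hk2)), mul_zero]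
    rw [Fintype.sum_eq_single i hzero] at h0
    have hpos : ∏ k ∈ i.1, cval n i.1 k ≠ 0 :=
      Finset.prod_ne_zero_iff.mpr (fun k hk => cval_ne_zero n i.1 k hk)
    exact (mul_eq_zero.mp h0).resolve_right hpos
  exact fun i => main i.1.card i rfl

lemma degree_mexp (ℓ : ℕ) (ε : Finset (Fin (n-1))) (hε : ε.card ≤ ℓ) :
    (mexp n ℓ ε).degree = ℓ := by
  rw [degree_eq, mexp_none]
  have : zd n (mexp n ℓ ε) = ε.card := by
    rw [zd]
    calc ∑ k : Fin (n-1), (mexp n ℓ ε) (some k)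
        = ∑ k : Fin (n-1), (if k ∈ ε then 1 else 0) :=
          Finset.sum_congr rfl (fun k _ => mexp_some n ℓ ε k)
      _ = ∑ _k ∈ ε, 1 := by rw [Finset.sum_ite_mem, Finset.univ_inter]
      _ = ε.card := by rw [Finset.sum_const, smul_eq_mul, mul_one]
  rw [this]
  omega

/-- the degree-ℓ part of the quotient -/
noncomputable def Qsub (ℓ : ℕ) : Submodule ℚ (MvPolynomial (Option (Fin (n-1))) ℚ ⧸ Jid n) :=
  Submodule.map (Ideal.Quotient.mkₐ ℚ (Jid n)).toLinearMap
    (homogeneousSubmodule (Option (Fin (n-1))) ℚ ℓ)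

lemma Qsub_eq_span (ℓ : ℕ) :
    Qsub n ℓ = Submodule.span ℚ (Set.range
      (fun ε : {ε : Finset (Fin (n-1)) // ε.card ≤ ℓ} =>
        Ideal.Quotient.mkₐ ℚ (Jid n) (monomial (mexp n ℓ ε.1) (1:ℚ)))) := by
  apply le_antisymm
  · rintro _ ⟨f, hf, rfl⟩
    have hfU : f ∈ Upol n ℓ := by
      replace hf : f.IsHomogeneous ℓ := hf
      nth_rewrite 1 [MvPolynomial.as_sum f]
      refine Submodule.sum_mem _ (fun v hv => ?_)
      have hdeg : v.degree = ℓ := by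
        rw [Finsupp.degree_eq_weight_one]
        exact hf (MvPolynomial.mem_support_iff.mp hv)
      have : monomial v (coeff v f) = (coeff v f) • monomial v (1:ℚ) := by
        rw [MvPolynomial.smul_monomial, smul_eq_mul, mul_one]
      rw [this]
      exact Submodule.smul_mem _ _ (mono_mem n _ ℓ v rfl hdeg)
    have hmap : (Ideal.Quotient.mkₐ ℚ (Jid n)).toLinearMap f ∈
        Submodule.map (Ideal.Quotient.mkₐ ℚ (Jid n)).toLinearMap (Upol n ℓ) :=
      Submodule.mem_map_of_mem hfU
    have hle : Submodule.map (Ideal.Quotient.mkₐ ℚ (Jid n)).toLinearMap (Upol n ℓ)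
        ≤ Submodule.span ℚ (Set.range
          (fun ε : {ε : Finset (Fin (n-1)) // ε.card ≤ ℓ} =>
            Ideal.Quotient.mkₐ ℚ (Jid n) (monomial (mexp n ℓ ε.1) (1:ℚ)))) := by
      rw [Upol, Submodule.map_sup]
      apply sup_le
      · rw [Submodule.map_span, ← Set.range_comp]
        exact Submodule.span_le.mpr (fun y hy => Submodule.subset_span hy)
      · rintro _ ⟨q, hq, rfl⟩
        have : (Ideal.Quotient.mkₐ ℚ (Jid n)).toLinearMap q = 0 := by
          show Ideal.Quotient.mkₐ ℚ (Jid n) q = 0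
          rw [Ideal.Quotient.mkₐ_eq_mk]
          exact Ideal.Quotient.eq_zero_iff_mem.mpr hq
        rw [this]
        exact Submodule.zero_mem _
    exact hle hmap
  · rw [Submodule.span_le]
    rintro _ ⟨ε, rfl⟩
    exact ⟨monomial (mexp n ℓ ε.1) (1:ℚ),
      (mem_homogeneousSubmodule _ _).mpr
        (isHomogeneous_monomial _ (degree_mexp n ℓ ε.1 ε.2)), rfl⟩

set_option synthInstance.maxHeartbeats 1000000 in
lemma finrank_Qsub (ℓ : ℕ) :
    Module.finrank ℚ (Qsub n ℓ) = ∑ j ∈ Finset.range (ℓ+1), Nat.choose (n-1) j := by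
  rw [Qsub_eq_span, finrank_span_eq_card (R := ℚ) (indep n ℓ)]
  rw [Fintype.card_subtype]
  rw [Finset.card_eq_sum_card_fiberwise
    (f := fun ε : Finset (Fin (n-1)) => ε.card) (t := Finset.range (ℓ+1))
    (fun x hx => Finset.mem_range.mpr (Nat.lt_succ_of_le (Finset.mem_filter.mp hx).2))]
  refine Finset.sum_congr rfl (fun j hj => ?_)
  have hjl : j ≤ ℓ := by
    have := Finset.mem_range.mp hj
    omega
  have : (Finset.univ.filter fun ε : Finset (Fin (n-1)) => ε.card ≤ ℓ).filter
      (fun ε => ε.card = j) = Finset.univ.filter (fun ε : Finset (Fin (n-1)) => ε.card = j) := by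
    rw [Finset.filter_filter]
    refine Finset.filter_congr (fun ε _ => ?_)
    constructor
    · exact fun h => h.2
    · exact fun h => ⟨by omega, h⟩
  rw [this]
  have : Finset.univ.filter (fun ε : Finset (Fin (n-1)) => ε.card = j)
      = Finset.powersetCard j Finset.univ := by
    rw [Finset.powersetCard_eq_filter, Finset.powerset_univ]
  rw [this, Finset.card_powersetCard, Finset.card_univ, Fintype.card_fin]

end Pet

namespace Pet

lemma one_sub_X_inv : ((1 : PowerSeries ℚ) - PowerSeries.X)⁻¹
    = PowerSeries.mk fun _ => (1:ℚ) := by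
  rw [PowerSeries.inv_eq_iff_mul_eq_one (by simp)]
  ext m
  rw [mul_sub, mul_one, map_sub]
  cases m with
  | zero => simp
  | succ m => simp [PowerSeries.coeff_succ_mul_X]

lemma coeff_rhs (N ℓ : ℕ) :
    PowerSeries.coeff ℓ ((1 + PowerSeries.X)^N * (1 - PowerSeries.X)⁻¹)
      = ∑ j ∈ Finset.range (ℓ+1), (Nat.choose N j : ℚ) := by
  rw [one_sub_X_inv, PowerSeries.coeff_mul]
  have hc : ∀ i, PowerSeries.coeff i ((1 + PowerSeries.X : PowerSeries ℚ)^N)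
      = (N.choose i : ℚ) := by
    intro i
    have h1 : ((1 + Polynomial.X : Polynomial ℚ) : PowerSeries ℚ)
        = 1 + PowerSeries.X := by
      rw [Polynomial.coe_add, Polynomial.coe_one, Polynomial.coe_X]
    rw [← h1, ← Polynomial.coe_pow, Polynomial.coeff_coe,
      Polynomial.coeff_one_add_X_pow]
  rw [Finset.Nat.sum_antidiagonal_eq_sum_range_succ_mk]
  exact Finset.sum_congr rfl fun i hi => by rw [hc i, PowerSeries.coeff_mk, mul_one]

end Pet


/-- For `n ≥ 2`, the Hilbert series of `ℚ[z₁,…,z_{n-1},t]/J`, where `J` is generated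
by the quadratics `z_k (z_k − (1/2) z_{k-1} − (1/2) z_{k+1} − t)` for `k = 1,…,n-1`
(with `z₀ = z_n = 0`), equals `(1 + q)^{n-1}/(1 − q)`. -/
theorem hilbertSeries_peterson_equivariant (n : ℕ) (hn : 2 ≤ n) :
    hilbertSeries
        (Ideal.span (Set.range fun k : Fin (n - 1) =>
          zVar n ((k : ℕ) + 1) *
            (zVar n ((k : ℕ) + 1) - MvPolynomial.C (1/2 : ℚ) * zVar n (k : ℕ)
              - MvPolynomial.C (1/2 : ℚ) * zVar n ((k : ℕ) + 2) - MvPolynomial.X none)))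
      = (1 + (PowerSeries.X : PowerSeries ℚ)) ^ (n - 1) *
          (1 - (PowerSeries.X : PowerSeries ℚ))⁻¹ := by
  have hJ : (Ideal.span (Set.range fun k : Fin (n - 1) =>
          zVar n ((k : ℕ) + 1) *
            (zVar n ((k : ℕ) + 1) - MvPolynomial.C (1/2 : ℚ) * zVar n (k : ℕ)
              - MvPolynomial.C (1/2 : ℚ) * zVar n ((k : ℕ) + 2) - MvPolynomial.X none)))
      = Pet.Jid n := rfl
  rw [hJ]
  apply PowerSeries.ext
  intro ℓ
  rw [hilbertSeries, PowerSeries.coeff_mk, Pet.coeff_rhs]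
  have : Submodule.map (Ideal.Quotient.mkₐ ℚ (Pet.Jid n)).toLinearMap
      (MvPolynomial.homogeneousSubmodule (Option (Fin (n-1))) ℚ ℓ) = Pet.Qsub n ℓ := rfl
  rw [this, Pet.finrank_Qsub, Nat.cast_sum]
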